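/- Let X be a finite set and N a linear subspace of ℝ^X. Let X̲ = {x ∈ X : v(x) ≠ 0 for some v ∈ N}, and for x, y ∈ X̲ define x ∼ y iff every v ∈ N with v(x) ≠ 0 satisfies v(y) ≠ 0 (this is an equivalence relation on X̲). Then for every equivalence class Z of ∼, the subspace { v|_Z : v ∈ N } of ℝ^Z (the image of N under restriction of functions to Z) has dimension exactly one. -/

import Mathlib

open scoped BigOperators Classical

noncomputable section

variable {X : Type*}

/-- A probability distribution on a finite set `X`. -/
def IsProb [Fintype X] (P : X → ℝ) : Prop :=
  (∀ x, 0 ≤ P x) ∧ ∑ x, P x = 1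

/-- Information divergence `D(P‖Q)` with values in `EReal`, equal to `⊤` if the
support of `P` is not contained in the support of `Q`.  (The convention
`0 · log 0 = 0` holds automatically since `Real.log 0 = 0`.) -/
def KL [Fintype X] (P Q : X → ℝ) : EReal :=
  if ∀ x, Q x = 0 → P x = 0 then ((∑ x, P x * Real.log (P x / Q x) : ℝ) : EReal) else ⊤

/-- The exponential family with strictly positive reference measure `ν` and extended
tangent space `T` (a subspace of `ℝ^X` containing the constants): the set of strictly
positive probability distributions `P` with `log (P/ν) ∈ T`. -/
def expFam [Fintype X] (ν : X → ℝ) (T : Submodule ℝ (X → ℝ)) : Set (X → ℝ) :=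
  {P | (∀ x, 0 < P x) ∧ ∑ x, P x = 1 ∧ (fun x => Real.log (P x / ν x)) ∈ T}

/-- `sup_P inf_{Q ∈ E} D(P‖Q)`, supremum over all probability distributions `P`. -/
def maxDiv [Fintype X] (E : Set (X → ℝ)) : EReal :=
  ⨆ P ∈ {P : X → ℝ | IsProb P}, ⨅ Q ∈ E, KL P Q

/-- The orthogonal complement of `T` in `ℝ^X` w.r.t. the standard inner product
(the normal space of the exponential family with extended tangent space `T`). -/
def orthSpace [Fintype X] (T : Submodule ℝ (X → ℝ)) : Set (X → ℝ) :=
  {u | ∀ t ∈ T, ∑ x, u x * t x = 0}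

/-- A circuit vector of a set `N ⊆ ℝ^X`: a nonzero element whose support is minimal,
i.e. every `u ∈ N` with `supp u ⊆ supp v` is a scalar multiple of `v`. -/
def IsCircuitVector (N : Set (X → ℝ)) (v : X → ℝ) : Prop :=
  v ∈ N ∧ v ≠ 0 ∧ ∀ u ∈ N, Function.support u ⊆ Function.support v → ∃ α : ℝ, u = α • v

/-- A circuit of `N`: the support of a circuit vector. -/
def IsCircuit (N : Set (X → ℝ)) (σ : Set X) : Prop :=
  ∃ v, IsCircuitVector N v ∧ σ = Function.support v

/-- The closed partition model of the partition given by the equivalence relation `r`: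
all probability distributions constant on each block. -/
def partModel [Fintype X] (r : X → X → Prop) : Set (X → ℝ) :=
  {Q | IsProb Q ∧ ∀ x y, r x y → Q x = Q y}

/-- The partition exponential family of the partition given by the equivalence
relation `r`: all strictly positive probability distributions constant on each block. -/
def partExpFam [Fintype X] (r : X → X → Prop) : Set (X → ℝ) :=
  {P | (∀ x, 0 < P x) ∧ ∑ x, P x = 1 ∧ ∀ x y, r x y → P x = P y}

/-- The set `X̲` of points not annihilated by all of `N`. -/
def underlineSet (N : Set (X → ℝ)) : Set X := {x | ∃ v ∈ N, v x ≠ 0}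

/-- The relation `x ∼ y` : every `v ∈ N` with `v x ≠ 0` has `v y ≠ 0`. -/
def coRel (N : Set (X → ℝ)) (x y : X) : Prop := ∀ v ∈ N, v x ≠ 0 → v y ≠ 0

/-- `Z` is an equivalence class of `∼` on `X̲`. -/
def IsClassOf (N : Set (X → ℝ)) (Z : Set X) : Prop :=
  ∃ x ∈ underlineSet N, Z = {y | coRel N x y}

end

/-- for every equivalence class `Z` of `∼`, the image of `N` under
restriction of functions to `Z` is one-dimensional. -/
theorem stmt15 (X : Type*) [Fintype X] (N : Submodule ℝ (X → ℝ))
    (Z : Set X) (hZ : IsClassOf (N : Set (X → ℝ)) Z) :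
    Module.finrank ℝ (N.map (LinearMap.funLeft ℝ ℝ (Subtype.val : Z → X))) = 1 := by
  obtain ⟨x, ⟨w, hwN, hwx⟩, rfl⟩ := hZ
  set Z : Set X := {y | coRel (N : Set (X → ℝ)) x y} with hZdef
  set L := LinearMap.funLeft ℝ ℝ (Subtype.val : Z → X) with hL
  have hxZ : x ∈ Z := fun v _ h => h
  have hkey : ∀ v ∈ N, ∀ y ∈ Z, v y = (v x / w x) * w y := by
    intro v hv y hy
    by_contra hne
    set u : X → ℝ := v - (v x / w x) • w with hu
    have huN : u ∈ N := N.sub_mem hv (N.smul_mem _ hwN)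
    have hux : u x = 0 := by
      simp only [hu, Pi.sub_apply, Pi.smul_apply, smul_eq_mul]
      field_simp
      ring
    have huy : u y ≠ 0 := by
      simp only [hu, Pi.sub_apply, Pi.smul_apply, smul_eq_mul]
      exact sub_ne_zero.mpr hne
    set w' : X → ℝ := w - (w y / u y) • u with hw'
    have hw'N : w' ∈ N := N.sub_mem hwN (N.smul_mem _ huN)
    have hw'x : w' x ≠ 0 := by
      simp only [hw', Pi.sub_apply, Pi.smul_apply, smul_eq_mul, hux, mul_zero, sub_zero]
      exact hwx
    have := hy w' hw'N hw'x
    apply this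
    simp only [hw', Pi.sub_apply, Pi.smul_apply, smul_eq_mul]
    field_simp
    ring
  have hLw : L w ≠ 0 := by
    intro h
    apply hwx
    have := congrFun h ⟨x, hxZ⟩
    simpa [hL, LinearMap.funLeft] using this
  have hmap : N.map L = Submodule.span ℝ {L w} := by
    apply le_antisymm
    · rintro p ⟨v, hv, rfl⟩
      rw [Submodule.mem_span_singleton]
      refine ⟨v x / w x, ?_⟩
      funext z
      have := hkey v hv z.1 z.2
      simp [hL, LinearMap.funLeft, this]
    · rw [Submodule.span_le, Set.singleton_subset_iff]
      exact ⟨w, hwN, rfl⟩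
  rw [hmap]
  exact finrank_span_singleton hLw
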